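/- Let r ≥ 2 and let A ∈ M_2(𝔬_{ℓ'}) be cyclic. Then the index of det(C_{GL_2(𝔬_r)}(ψ_A)) in 𝔬_r^× equals (q−1)q^{ℓ'−1}/|det(C_{GL_2(𝔬_{ℓ'})}(A))|; equivalently, |det(C_{GL_2(𝔬_r)}(ψ_A))| = |det(C_{GL_2(𝔬_{ℓ'})}(A))|·q^ℓ. -/

import Mathlib

open Matrix

noncomputable section

/-- A (complex) representation of a group `G`, bundled with its carrier space. -/
structure Rep' (G : Type) [Group G] : Type 1 where
  V : Type
  [instAdd : AddCommGroup V]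
  [instMod : Module ℂ V]
  ρ : Representation ℂ G V

attribute [instance] Rep'.instAdd Rep'.instMod

namespace Rep'

variable {G H : Type} [Group G] [Group H]

/-- The dimension of a representation. -/
def dim (W : Rep' G) : ℕ := Module.finrank ℂ W.V

/-- Equivalence (isomorphism) of representations. -/
def Iso (W₁ W₂ : Rep' G) : Prop :=
  ∃ e : W₁.V ≃ₗ[ℂ] W₂.V, ∀ (g : G) (v : W₁.V), e (W₁.ρ g v) = W₂.ρ g (e v)

/-- A representation is irreducible if it is nonzero and has no proper nonzero
invariant subspace. -/
def IsIrreducible (W : Rep' G) : Prop :=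
  (∃ v : W.V, v ≠ 0) ∧
    ∀ p : Submodule ℂ W.V, (∀ (g : G) (v : W.V), v ∈ p → W.ρ g v ∈ p) → p = ⊥ ∨ p = ⊤

/-- Restriction of a representation along a group homomorphism (e.g. the inclusion
of a subgroup). -/
def res (W : Rep' G) (f : H →* G) : Rep' H where
  V := W.V
  ρ := W.ρ.comp f

/-- `W.IsConstituentOf V` : `W` is an irreducible constituent of `V`, i.e. `W` is
irreducible and there is a nonzero `G`-equivariant map `W → V`. -/
def IsConstituentOf (W V : Rep' G) : Prop :=
  W.IsIrreducible ∧
    ∃ f : W.V →ₗ[ℂ] V.V, f ≠ 0 ∧ ∀ (g : G) (w : W.V), f (W.ρ g w) = V.ρ g (f w)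

/-- External direct sum of a family of representations. -/
def pi {ι : Type} (c : ι → Rep' G) : Rep' G where
  V := ∀ i, (c i).V
  ρ :=
    { toFun := fun g => LinearMap.pi fun i => ((c i).ρ g).comp (LinearMap.proj i)
      map_one' := by ext f i; simp
      map_mul' := fun g h => by ext f i; simp [Module.End.mul_apply] }

/-- `V` decomposes as a direct sum of `n` irreducible representations. -/
def DecomposesInto (V : Rep' G) (n : ℕ) : Prop :=
  ∃ c : Fin n → Rep' G, (∀ i, (c i).IsIrreducible) ∧ V.Iso (pi c)

end Rep'

/-- The one-dimensional representation attached to a `ℂˣ`-valued character. -/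
def charRep {G : Type} [Group G] (χ : G →* ℂˣ) : Rep' G where
  V := ℂ
  ρ :=
    { toFun := fun g => (χ g : ℂ) • LinearMap.id
      map_one' := by simp; rfl
      map_mul' := fun g h => by
        ext
        simp [Module.End.mul_apply, smul_smul, mul_comm] }

section Induction

variable {G : Type} [Group G] (H : Subgroup G) (φ : Rep' H)

/-- The space of the representation induced from a subgroup: functions `f : G → V`
with `f (h * g) = φ h (f g)`. -/
def indSubmodule : Submodule ℂ (G → φ.V) where
  carrier := {f | ∀ (h : H) (g : G), f (↑h * g) = φ.ρ h (f g)}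
  add_mem' := by intro f g hf hg h x; simp [hf h x, hg h x]
  zero_mem' := by intro h x; simp
  smul_mem' := by intro c f hf h x; simp [hf h x]

/-- The representation of `G` induced from the representation `φ` of the subgroup `H`. -/
def Rep'.ind : Rep' G where
  V := ↥(indSubmodule H φ)
  ρ :=
    { toFun := fun g =>
        { toFun := fun f =>
            ⟨fun x => (f : G → φ.V) (x * g), by
              intro h y
              have := f.2 h (y * g)
              simpa [mul_assoc] using this⟩
          map_add' := fun f₁ f₂ => by ext x; simp
          map_smul' := fun c f => by ext x; simp }
      map_one' := by ext f x; simp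
      map_mul' := fun g₁ g₂ => by
        ext f x
        simp [Module.End.mul_apply, mul_assoc] }

end Induction


variable {o : Type} [CommRing o]

/-- The finite quotient `𝔬/𝔭^m = 𝔬/(π^m)` of a discrete valuation ring `𝔬` with
uniformizer `π`. -/
abbrev O (π : o) (m : ℕ) : Type := o ⧸ (Ideal.span {π ^ m})

/-- The image of the uniformizer `π` in `𝔬/𝔭^m`. -/
def Ounif (π : o) (m : ℕ) : O π m := Ideal.Quotient.mk _ π

/-- The reduction map `𝔬/𝔭^r → 𝔬/𝔭^s` for `s ≤ r`. -/
def redMap (π : o) (r s : ℕ) (h : s ≤ r) : O π r →+* O π s :=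
  Ideal.Quotient.factor (Ideal.span_singleton_le_span_singleton.mpr (pow_dvd_pow π h))

/-- The `i`-th congruence subgroup `M^i = I + π^i M_2(𝔬_r)` of `GL_2(𝔬_r)`. -/
def Mgrp (π : o) (r i : ℕ) : Subgroup (GL (Fin 2) (O π r)) where
  carrier := {g | ∃ B : Matrix (Fin 2) (Fin 2) (O π r),
    (g : Matrix (Fin 2) (Fin 2) (O π r)) = 1 + (Ounif π r) ^ i • B}
  one_mem' := ⟨0, by simp⟩
  mul_mem' := by
    rintro a b ⟨B, hB⟩ ⟨C, hC⟩
    refine ⟨B + C + (Ounif π r) ^ i • (B * C), ?_⟩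
    rw [Units.val_mul, hB, hC]
    simp only [add_mul, mul_add, one_mul, mul_one, smul_add, Matrix.smul_mul,
      Matrix.mul_smul, smul_smul]
    abel
  inv_mem' := by
    rintro a ⟨B, hB⟩
    refine ⟨-(B * ((a⁻¹ : GL (Fin 2) (O π r)) : Matrix (Fin 2) (Fin 2) (O π r))), ?_⟩
    have h1 := Units.mul_inv a
    rw [hB, add_mul, one_mul] at h1
    have h2 := eq_sub_of_add_eq h1
    rw [smul_neg, ← sub_eq_add_neg, ← Matrix.smul_mul]
    exact h2

instance Mgrp_normal (π : o) (r i : ℕ) : (Mgrp π r i).Normal := by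
  constructor
  rintro n ⟨B, hB⟩ g
  refine ⟨(g : Matrix (Fin 2) (Fin 2) (O π r)) * B *
    ((g⁻¹ : GL (Fin 2) (O π r)) : Matrix (Fin 2) (Fin 2) (O π r)), ?_⟩
  rw [Units.val_mul, Units.val_mul, hB]
  rw [mul_add, mul_one, add_mul, Units.mul_inv, Matrix.mul_smul, Matrix.smul_mul,
    mul_assoc]

/-- `SL_n` as the subgroup of determinant-one elements of `GL_n`. -/
def SLsub (R : Type) [CommRing R] (n : Type) [DecidableEq n] [Fintype n] :
    Subgroup (GL n R) :=
  (Matrix.GeneralLinearGroup.det : GL n R →* Rˣ).ker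

/-- Extension of a character of a subgroup by zero to the whole group. -/
def extChar {G : Type} [Group G] (N : Subgroup G) (χ : N →* ℂˣ) (g : G) : ℂ :=
  letI := Classical.dec (g ∈ N)
  if h : g ∈ N then χ ⟨g, h⟩ else 0

/-- The inertia group `C_G(χ)` of a character `χ` of a subgroup `N ≤ G`:
the set of `g ∈ G` such that the `g`-conjugate of `χ` equals `χ`. -/
def inertia {G : Type} [Group G] (N : Subgroup G) (χ : N →* ℂˣ) : Subgroup G where
  carrier := {g | ∀ x : G, extChar N χ (g * x * g⁻¹) = extChar N χ x}
  one_mem' := by intro x; simp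
  mul_mem' := by
    intro a b ha hb x
    have e : a * b * x * (a * b)⁻¹ = a * (b * x * b⁻¹) * a⁻¹ := by group
    rw [e, ha (b * x * b⁻¹), hb x]
  inv_mem' := by
    intro a ha x
    have h := ha (a⁻¹ * x * a)
    have e : a * (a⁻¹ * x * a) * a⁻¹ = x := by group
    rw [e] at h
    have e2 : a⁻¹ * x * (a⁻¹)⁻¹ = a⁻¹ * x * a := by rw [inv_inv]
    rw [e2]
    exact h.symm

lemma mem_inertia {G : Type} [Group G] {N : Subgroup G} {χ : N →* ℂˣ} {g : G} :
    g ∈ inertia N χ ↔ ∀ x : G, extChar N χ (g * x * g⁻¹) = extChar N χ x :=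
  Iff.rfl

/-- The conjugate `χ^t : n ↦ χ (t⁻¹ n t)` of a character `χ` of a normal subgroup. -/
def conjChar {G : Type} [Group G] {N : Subgroup G} [N.Normal] (χ : N →* ℂˣ) (t : G) :
    N →* ℂˣ :=
  χ.comp (MulAut.conjNormal t⁻¹).toMonoidHom

lemma extChar_conjChar {G : Type} [Group G] {N : Subgroup G} [hN : N.Normal]
    (χ : N →* ℂˣ) (t : G) (x : G) :
    extChar N (conjChar χ t) x = extChar N χ (t⁻¹ * x * t) := by
  unfold extChar
  by_cases h : x ∈ N
  · have h' : t⁻¹ * x * t ∈ N := by simpa using hN.conj_mem x h t⁻¹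
    rw [dif_pos h, dif_pos h']
    congr 1
    unfold conjChar
    simp only [MonoidHom.comp_apply, MulEquiv.toMonoidHom_eq_coe, MonoidHom.coe_coe]
    congr 1
    ext
    simp [MulAut.conjNormal_apply]
  · have h' : ¬ (t⁻¹ * x * t ∈ N) := by
      intro hc
      have hc2 := hN.conj_mem _ hc t
      have e : t * (t⁻¹ * x * t) * t⁻¹ = x := by group
      rw [e] at hc2
      exact h hc2
    rw [dif_neg h, dif_neg h']

lemma mem_inertia_conjChar {G : Type} [Group G] {N : Subgroup G} [N.Normal]
    {χ : N →* ℂˣ} {t g : G} :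
    g ∈ inertia N (conjChar χ t) ↔ t⁻¹ * g * t ∈ inertia N χ := by
  rw [mem_inertia, mem_inertia]
  constructor
  · intro hg x
    have h := hg (t * x * t⁻¹)
    rw [extChar_conjChar, extChar_conjChar] at h
    have e1 : t⁻¹ * (g * (t * x * t⁻¹) * g⁻¹) * t =
        (t⁻¹ * g * t) * x * (t⁻¹ * g * t)⁻¹ := by group
    have e2 : t⁻¹ * (t * x * t⁻¹) * t = x := by group
    rw [e1, e2] at h
    exact h
  · intro hg x
    rw [extChar_conjChar, extChar_conjChar]
    have h := hg (t⁻¹ * x * t)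
    have e1 : t⁻¹ * (g * x * g⁻¹) * t =
        (t⁻¹ * g * t) * (t⁻¹ * x * t) * (t⁻¹ * g * t)⁻¹ := by group
    rw [e1]
    exact h

/-- The canonical homomorphism `H.subgroupOf K → H`. -/
def subgroupOfHom {G : Type} [Group G] (H K : Subgroup G) : (H.subgroupOf K) →* H where
  toFun x := ⟨((x : K) : G), Subgroup.mem_subgroupOf.mp x.2⟩
  map_one' := by ext; rfl
  map_mul' a b := by ext; rfl

/-- The centralizer of a matrix `A` inside `GL_n(R)`. -/
def matCentralizer (R : Type) [CommRing R] {n : Type} [DecidableEq n] [Fintype n]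
    (A : Matrix n n R) : Subgroup (GL n R) where
  carrier := {g | A * (g : Matrix n n R) = (g : Matrix n n R) * A}
  one_mem' := by simp
  mul_mem' := by
    intro a b ha hb
    have ha' : Commute A ((a : GL n R) : Matrix n n R) := ha
    have hb' : Commute A ((b : GL n R) : Matrix n n R) := hb
    show A * ((a * b : GL n R) : Matrix n n R) = ((a * b : GL n R) : Matrix n n R) * A
    rw [Units.val_mul]
    exact ha'.mul_right hb'
  inv_mem' := by
    intro a ha
    have ha' : Commute A ((a : GL n R) : Matrix n n R) := ha
    exact ha'.units_inv_right

/-- A `2 × 2` matrix over `R` is cyclic if some vector `v` together with `Av`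
generates `R²`. -/
def IsCyclicMat {R : Type} [CommRing R] (A : Matrix (Fin 2) (Fin 2) R) : Prop :=
  ∃ v : Fin 2 → R, Submodule.span R {v, A.mulVec v} = ⊤

/-- The diagonal matrix `diag(d, 1)` as an element of `GL_2(R)`. -/
def diagGL {R : Type} [CommRing R] (d : Rˣ) : GL (Fin 2) R where
  val := Matrix.diagonal ![(d : R), 1]
  inv := Matrix.diagonal ![((d⁻¹ : Rˣ) : R), 1]
  val_inv := by
    rw [Matrix.diagonal_mul_diagonal]
    have h : (fun i => ![(d : R), 1] i * ![((d⁻¹ : Rˣ) : R), 1] i) = fun _ => (1 : R) := by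
      funext i
      fin_cases i <;> simp
    rw [h]
    exact Matrix.diagonal_one
  inv_val := by
    rw [Matrix.diagonal_mul_diagonal]
    have h : (fun i => ![((d⁻¹ : Rˣ) : R), 1] i * ![(d : R), 1] i) = fun _ => (1 : R) := by
      funext i
      fin_cases i <;> simp
    rw [h]
    exact Matrix.diagonal_one

section Extra

variable {o : Type} [CommRing o]

/-- `χ` is the character `ψ_A` of the congruence subgroup `M^ℓ ≤ GL_2(𝔬_r)`
(`ℓ = ⌈r/2⌉`) attached to the additive character `ψ` and the lift `Ã ∈ M_2(𝔬_r)`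
of `A ∈ M_2(𝔬_{ℓ'})`, i.e. `χ (1 + π^ℓ B) = ψ (π^ℓ · trace (Ã B))`. -/
def IsPsiChar (π : o) (r : ℕ) (ψ : AddChar (O π r) ℂ)
    (Atil : Matrix (Fin 2) (Fin 2) (O π r)) (χ : (Mgrp π r ((r + 1) / 2)) →* ℂˣ) : Prop :=
  ∀ (g : (Mgrp π r ((r + 1) / 2))) (B : Matrix (Fin 2) (Fin 2) (O π r)),
    ((g : GL (Fin 2) (O π r)) : Matrix (Fin 2) (Fin 2) (O π r)) =
      1 + (Ounif π r) ^ ((r + 1) / 2) • B →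
    (χ g : ℂ) = ψ ((Ounif π r) ^ ((r + 1) / 2) * Matrix.trace (Atil * B))

/-- `ρ` belongs to `Irr(G ∣ χ)`: `ρ` is an irreducible constituent of the
representation of `G` induced from the character `χ` of the subgroup `H`. -/
def MemIrrOver {G : Type} [Group G] (H : Subgroup G) (χ : H →* ℂˣ) (ρ : Rep' G) : Prop :=
  ρ.IsConstituentOf (Rep'.ind H (charRep χ))

/-- `ρ` is a regular representation of `GL_2(𝔬_r)`: it is irreducible, and any
character `ψ_A` of `M^ℓ` occurring in the restriction of `ρ` to `M^ℓ`
has `A ∈ M_2(𝔬_{ℓ'})` cyclic. -/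
def IsRegularRep (π : o) (r : ℕ) (ψ : AddChar (O π r) ℂ)
    (ρ : Rep' (GL (Fin 2) (O π r))) : Prop :=
  ρ.IsIrreducible ∧
    ∀ (Atil : Matrix (Fin 2) (Fin 2) (O π r)) (χ : (Mgrp π r ((r + 1) / 2)) →* ℂˣ),
      IsPsiChar π r ψ Atil χ →
      (charRep χ).IsConstituentOf (ρ.res (Mgrp π r ((r + 1) / 2)).subtype) →
      IsCyclicMat ((redMap π r (r / 2) (Nat.div_le_self r 2)).mapMatrix Atil)

/-- Conjugation `X ↦ t⁻¹ X t` as a homomorphism from the inertia group of the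
conjugate character `χ^t` (intersected with a subgroup `S`, e.g. `SL_2`) to the
inertia group of `χ`. -/
def conjInertiaHom {G : Type} [Group G] (N : Subgroup G) [N.Normal] (S : Subgroup G)
    (χ : N →* ℂˣ) (t : G) :
    ((inertia N (conjChar χ t)).subgroupOf S) →* (inertia N χ) where
  toFun x := ⟨t⁻¹ * (((x : S) : G)) * t,
    mem_inertia_conjChar.mp (Subgroup.mem_subgroupOf.mp x.2)⟩
  map_one' := by ext; simp
  map_mul' a b := by
    ext
    push_cast
    group

end Extra

/-- The diagonal matrix `diag(d, 1, …, 1)` as an element of `GL_n(R)`. -/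
def diagGLn (R : Type) [CommRing R] (n : ℕ) (hn : 1 ≤ n) (d : Rˣ) : GL (Fin n) R where
  val := Matrix.diagonal (fun j => if j = (⟨0, hn⟩ : Fin n) then (d : R) else 1)
  inv := Matrix.diagonal (fun j => if j = (⟨0, hn⟩ : Fin n) then ((d⁻¹ : Rˣ) : R) else 1)
  val_inv := by
    rw [Matrix.diagonal_mul_diagonal]
    have h : (fun j => (if j = (⟨0, hn⟩ : Fin n) then (d : R) else 1) *
        (if j = (⟨0, hn⟩ : Fin n) then ((d⁻¹ : Rˣ) : R) else 1)) = fun _ => (1 : R) := by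
      funext j
      split_ifs <;> simp
    rw [h]
    exact Matrix.diagonal_one
  inv_val := by
    rw [Matrix.diagonal_mul_diagonal]
    have h : (fun j => (if j = (⟨0, hn⟩ : Fin n) then ((d⁻¹ : Rˣ) : R) else 1) *
        (if j = (⟨0, hn⟩ : Fin n) then (d : R) else 1)) = fun _ => (1 : R) := by
      funext j
      split_ifs <;> simp
    rw [h]
    exact Matrix.diagonal_one


/-! ### Auxiliary lemmas -/

set_option linter.unusedSectionVars false

section AuxRing

variable {o : Type} [CommRing o] [IsDomain o] [IsDiscreteValuationRing o]
variable {π : o} (hπ : Irreducible π)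

lemma Omk_eq_zero {m : ℕ} {a : o} :
    (Ideal.Quotient.mk (Ideal.span {π ^ m}) a = 0) ↔ π ^ m ∣ a := by
  rw [Ideal.Quotient.eq_zero_iff_mem, Ideal.mem_span_singleton]

lemma redMap_mk (r s : ℕ) (h : s ≤ r) (a : o) :
    redMap π r s h (Ideal.Quotient.mk _ a) = Ideal.Quotient.mk _ a :=
  Ideal.Quotient.factor_mk _ a

lemma redMap_surjective (r s : ℕ) (h : s ≤ r) : Function.Surjective (redMap π r s h) := by
  intro x
  obtain ⟨a, rfl⟩ := Ideal.Quotient.mk_surjective x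
  exact ⟨Ideal.Quotient.mk _ a, redMap_mk r s h a⟩

lemma Ounif_pow (m k : ℕ) : (Ounif π m) ^ k = Ideal.Quotient.mk _ (π ^ k) := by
  rw [Ounif, ← map_pow]

lemma Ounif_pow_eq_zero {m k : ℕ} (h : m ≤ k) : (Ounif π m) ^ k = (0 : O π m) := by
  rw [Ounif_pow, Omk_eq_zero]
  exact pow_dvd_pow π h

include hπ in
lemma psi_nondeg {r : ℕ} (hr : 1 ≤ r) (ψ : AddChar (O π r) ℂ)
    (hψ : ψ ((Ounif π r) ^ (r - 1)) ≠ 1) (y : O π r) (hy : ∀ x, ψ (y * x) = 1) :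
    y = 0 := by
  by_contra h
  obtain ⟨a, rfl⟩ := Ideal.Quotient.mk_surjective y
  have ha : ¬ π ^ r ∣ a := fun hd => h (Omk_eq_zero.mpr hd)
  have ha0 : a ≠ 0 := by rintro rfl; exact ha (dvd_zero _)
  obtain ⟨n, u, rfl⟩ := IsDiscreteValuationRing.eq_unit_mul_pow_irreducible ha0 hπ
  have hn : n < r := by
    by_contra hn
    push_neg at hn
    exact ha (Dvd.dvd.mul_left (pow_dvd_pow π hn) _)
  have key := hy (Ideal.Quotient.mk _ (((u⁻¹ : oˣ) : o) * π ^ (r - 1 - n)))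
  rw [← _root_.map_mul] at key
  have : ((u : o) * π ^ n) * (((u⁻¹ : oˣ) : o) * π ^ (r - 1 - n)) = π ^ (r - 1) := by
    have : ((u : o)) * ((u⁻¹ : oˣ) : o) = 1 := by
      rw [← Units.val_mul, mul_inv_cancel, Units.val_one]
    calc ((u : o) * π ^ n) * (((u⁻¹ : oˣ) : o) * π ^ (r - 1 - n))
        = ((u : o) * ((u⁻¹ : oˣ) : o)) * (π ^ n * π ^ (r - 1 - n)) := by ring
      _ = π ^ (n + (r - 1 - n)) := by rw [this, one_mul, pow_add]
      _ = π ^ (r - 1) := by congr 1; omega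
  rw [this, ← Ounif_pow] at key
  exact hψ key

include hπ in
lemma unif_mul_eq_zero_iff {r s t : ℕ} (hst : s + t = r) (c : O π r) :
    (Ounif π r) ^ s * c = 0 ↔ redMap π r t (by omega) c = 0 := by
  obtain ⟨a, rfl⟩ := Ideal.Quotient.mk_surjective c
  rw [redMap_mk, Ounif_pow, ← _root_.map_mul, Omk_eq_zero, Omk_eq_zero]
  subst hst
  rw [pow_add]
  exact mul_dvd_mul_iff_left (pow_ne_zero s hπ.ne_zero)

lemma nilpotent_of_red_zero {r s : ℕ} (hs : 1 ≤ s) (h : s ≤ r) {c : O π r}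
    (hc : redMap π r s h c = 0) : c ^ r = 0 := by
  obtain ⟨a, rfl⟩ := Ideal.Quotient.mk_surjective c
  rw [redMap_mk, Omk_eq_zero] at hc
  obtain ⟨b, rfl⟩ := hc
  rw [← map_pow, Omk_eq_zero, mul_pow, ← pow_mul]
  exact Dvd.dvd.mul_right (pow_dvd_pow π (by nlinarith)) _

lemma isUnit_of_red {r s : ℕ} (hs : 1 ≤ s) (h : s ≤ r) {x : O π r}
    (hx : IsUnit (redMap π r s h x)) : IsUnit x := by
  obtain ⟨v, hv⟩ := hx
  obtain ⟨y, hy⟩ := redMap_surjective r s h ((v⁻¹ : (O π s)ˣ) : O π s)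
  have h1 : redMap π r s h (x * y - 1) = 0 := by
    rw [map_sub, _root_.map_mul, _root_.map_one, ← hv, hy, ← Units.val_mul, mul_inv_cancel,
      Units.val_one, sub_self]
  have h2 : IsNilpotent (x * y - 1) := ⟨r, nilpotent_of_red_zero hs h h1⟩
  have h3 : IsUnit (x * y) := by
    have := h2.isUnit_one_add
    rwa [add_sub_cancel] at this
  exact isUnit_of_mul_isUnit_left h3

end AuxRing

section AuxGroup

lemma card_eq_card_mul_card_ker {G H : Type} [Group G] [Group H]
    (f : G →* H) (hf : Function.Surjective f) :
    Nat.card G = Nat.card H * Nat.card f.ker := by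
  have e2 : (G ⧸ f.ker) ≃* H := QuotientGroup.quotientKerEquivOfSurjective f hf
  rw [Nat.card_congr (Subgroup.groupEquivQuotientProdSubgroup (s := f.ker)),
    Nat.card_prod, Nat.card_congr e2.toEquiv]

lemma addFinite_and_card {G H : Type} [AddGroup G] [AddGroup H] [Finite H]
    (f : G →+ H) (hf : Function.Surjective f) (hker : Finite f.ker) :
    Finite G ∧ Nat.card G = Nat.card H * Nat.card f.ker := by
  have e2 : (G ⧸ f.ker) ≃+ H := QuotientAddGroup.quotientKerEquivOfSurjective f hf
  have : Finite (G ⧸ f.ker) := Finite.of_equiv H e2.symm.toEquiv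
  have e1 : G ≃ (G ⧸ f.ker) × f.ker :=
    AddSubgroup.addGroupEquivQuotientProdAddSubgroup (s := f.ker)
  refine ⟨Finite.of_equiv _ e1.symm, ?_⟩
  rw [Nat.card_congr e1, Nat.card_prod, Nat.card_congr e2.toEquiv]

/-- Restriction of `f` to a map `comap f S → S`. -/
def comapRestrict {G H : Type} [Group G] [Group H] (f : G →* H) (S : Subgroup H) :
    (S.comap f) →* S where
  toFun x := ⟨f x.1, x.2⟩
  map_one' := by ext; simp
  map_mul' a b := by ext; simp

lemma card_comap_of_surjective {G H : Type} [Group G] [Group H]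
    (f : G →* H) (hf : Function.Surjective f) (S : Subgroup H) :
    Nat.card (S.comap f) = Nat.card S * Nat.card f.ker := by
  have hsurj : Function.Surjective (comapRestrict f S) := by
    rintro ⟨s, hs⟩
    obtain ⟨g, rfl⟩ := hf s
    refine ⟨⟨g, hs⟩, ?_⟩
    rfl
  rw [card_eq_card_mul_card_ker _ hsurj]
  congr 1
  apply Nat.card_congr
  refine ⟨fun x => ⟨x.1.1, ?_⟩, fun y => ⟨⟨y.1, ?_⟩, ?_⟩, fun x => ?_, fun y => ?_⟩
  · have hx := x.2
    rw [MonoidHom.mem_ker] at hx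
    have := congrArg Subtype.val hx
    exact this
  · have hy := y.2
    rw [MonoidHom.mem_ker] at hy
    show f y.1 ∈ S
    rw [hy]; exact S.one_mem
  · have hy := y.2
    rw [MonoidHom.mem_ker] at hy
    exact Subtype.ext hy
  · rfl
  · rfl

end AuxGroup

section AuxCount

variable {o : Type} [CommRing o] [IsDomain o] [IsDiscreteValuationRing o]
variable {π : o} (hπ : Irreducible π)

noncomputable def ker_redMap_equiv (hπ : Irreducible π) (r s : ℕ) (hs : s ≤ r) :
    {x : O π r // redMap π r s hs x = 0} ≃ O π (r - s) := by
  have hle : Ideal.span {π ^ (r - s)} ≤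
      LinearMap.ker (((Ideal.span {π ^ r}).mkQ).comp (LinearMap.mulLeft o (π ^ s))) := by
    rw [Ideal.span_le]
    intro x hx
    rw [Set.mem_singleton_iff] at hx
    subst hx
    simp only [SetLike.mem_coe, LinearMap.mem_ker, LinearMap.coe_comp, Function.comp_apply,
      LinearMap.mulLeft_apply, Submodule.mkQ_apply]
    rw [Ideal.Quotient.mk_eq_mk, ← pow_add]
    have : s + (r - s) = r := by omega
    rw [this]
    exact Omk_eq_zero.mpr dvd_rfl
  set F : O π (r - s) →ₗ[o] O π r := Submodule.liftQ _ _ hle with hF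
  have hFmk : ∀ a : o, F (Ideal.Quotient.mk _ a) =
      Ideal.Quotient.mk _ (π ^ s * a) := fun a => rfl
  have hmem : ∀ y : O π (r - s), redMap π r s hs (F y) = 0 := by
    intro y
    obtain ⟨a, rfl⟩ := Ideal.Quotient.mk_surjective y
    rw [hFmk, redMap_mk, Omk_eq_zero]
    exact Dvd.intro _ rfl
  refine (Equiv.ofBijective (fun y => ⟨F y, hmem y⟩ :
    O π (r - s) → {x : O π r // redMap π r s hs x = 0}) ⟨?_, ?_⟩).symm
  · intro y₁ y₂ h
    obtain ⟨a, rfl⟩ := Ideal.Quotient.mk_surjective y₁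
    obtain ⟨b, rfl⟩ := Ideal.Quotient.mk_surjective y₂
    have h' := congrArg Subtype.val h
    simp only [hFmk] at h'
    rw [Ideal.Quotient.mk_eq_mk_iff_sub_mem, ← mul_sub, Ideal.mem_span_singleton] at h'
    rw [Ideal.Quotient.mk_eq_mk_iff_sub_mem, Ideal.mem_span_singleton]
    have hsplit : π ^ r = π ^ s * π ^ (r - s) := by rw [← pow_add]; congr 1; omega
    rw [hsplit] at h'
    exact (mul_dvd_mul_iff_left (pow_ne_zero s hπ.ne_zero)).mp h'
  · rintro ⟨x, hx⟩
    obtain ⟨a, rfl⟩ := Ideal.Quotient.mk_surjective x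
    rw [redMap_mk, Omk_eq_zero] at hx
    obtain ⟨b, rfl⟩ := hx
    exact ⟨Ideal.Quotient.mk _ b, Subtype.ext (hFmk b).symm⟩

lemma subsingleton_O_zero : Subsingleton (O π 0) := by
  rw [Ideal.Quotient.subsingleton_iff, pow_zero, Ideal.span_singleton_one]

include hπ in
lemma finite_and_card_O [Finite (IsLocalRing.ResidueField o)]
    (q : ℕ) (hq : Nat.card (IsLocalRing.ResidueField o) = q) :
    ∀ m : ℕ, Finite (O π m) ∧ Nat.card (O π m) = q ^ m := by
  have base1 : Finite (O π 1) ∧ Nat.card (O π 1) = q := by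
    have e : O π 1 ≃+* o ⧸ IsLocalRing.maximalIdeal o :=
      Ideal.quotEquivOfEq (by rw [pow_one, ← hπ.maximalIdeal_eq])
    have e' : O π 1 ≃ IsLocalRing.ResidueField o := e.toEquiv
    exact ⟨Finite.of_equiv _ e'.symm, by rw [Nat.card_congr e', hq]⟩
  intro m
  induction m with
  | zero =>
    have := subsingleton_O_zero (π := π)
    exact ⟨Finite.of_subsingleton, by rw [pow_zero, Nat.card_eq_one_iff_unique]; exact ⟨this, ⟨0⟩⟩⟩
  | succ m ih =>
    rcases Nat.eq_zero_or_pos m with rfl | hm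
    · simpa using base1
    obtain ⟨ihfin, ihcard⟩ := ih
    have hle : m ≤ m + 1 := Nat.le_succ m
    set f := (redMap π (m + 1) m hle).toAddMonoidHom with hf
    have hker : {x : O π (m+1) // redMap π (m+1) m hle x = 0} ≃ O π 1 := by
      have := ker_redMap_equiv hπ (m+1) m hle
      rwa [Nat.add_sub_cancel_left] at this
    have hkerequiv : (f.ker : Type) ≃ O π 1 := by
      refine Equiv.trans ?_ hker
      exact Equiv.subtypeEquivRight (fun x => Iff.rfl)
    have hfin1 : Finite (O π 1) := base1.1
    have hfinker : Finite f.ker := Finite.of_equiv _ hkerequiv.symm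
    have hsurj : Function.Surjective f := redMap_surjective (m+1) m hle
    obtain ⟨hfin, hcard⟩ := addFinite_and_card f hsurj hfinker
    refine ⟨hfin, ?_⟩
    rw [hcard, ihcard, Nat.card_congr hkerequiv, base1.2, pow_succ]

include hπ in
lemma unitsMap_red_surjective (r s : ℕ) (hs1 : 1 ≤ s) (hsr : s ≤ r) :
    Function.Surjective (Units.map (redMap π r s hsr).toMonoidHom) := by
  intro u
  obtain ⟨x, hx⟩ := redMap_surjective r s hsr (u : O π s)
  have hux : IsUnit x := isUnit_of_red hs1 hsr (by rw [hx]; exact u.isUnit)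
  obtain ⟨w, rfl⟩ := hux
  exact ⟨w, Units.ext (by simpa using hx)⟩

noncomputable def unitsKer_equiv (hπ : Irreducible π) (r s : ℕ) (hs1 : 1 ≤ s) (hsr : s ≤ r) :
    ((Units.map (redMap π r s hsr).toMonoidHom).ker) ≃
      {c : O π r // redMap π r s hsr c = 0} := by
  refine Equiv.ofBijective (fun u => ⟨((u : (O π r)ˣ) : O π r) - 1, ?_⟩) ⟨?_, ?_⟩
  · have hu := u.2
    rw [MonoidHom.mem_ker] at hu
    have := congrArg Units.val hu
    simp only [Units.coe_map, RingHom.toMonoidHom_eq_coe, MonoidHom.coe_coe,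
      Units.val_one] at this
    rw [map_sub, _root_.map_one, this, sub_self]
  · intro u v h
    have h' := congrArg Subtype.val h
    simp only [sub_left_inj] at h'
    exact Subtype.ext (Units.ext h')
  · rintro ⟨c, hc⟩
    have hnil : IsNilpotent c := ⟨r, nilpotent_of_red_zero hs1 hsr hc⟩
    have hu : IsUnit (1 + c) := hnil.isUnit_one_add
    obtain ⟨w, hw⟩ := hu
    refine ⟨⟨w, ?_⟩, ?_⟩
    · rw [MonoidHom.mem_ker]
      apply Units.ext
      simp only [Units.coe_map, RingHom.toMonoidHom_eq_coe, MonoidHom.coe_coe, Units.val_one]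
      rw [hw, map_add, _root_.map_one, hc, add_zero]
    · apply Subtype.ext
      show ((w : (O π r)ˣ) : O π r) - 1 = c
      rw [hw]; ring

include hπ in
lemma card_units_O [Finite (IsLocalRing.ResidueField o)]
    (q : ℕ) (hq : Nat.card (IsLocalRing.ResidueField o) = q)
    (m : ℕ) (hm : 1 ≤ m) :
    Nat.card ((O π m)ˣ) = (q - 1) * q ^ (m - 1) := by
  have hfin1 : Finite (O π 1) := (finite_and_card_O hπ q hq 1).1
  have hfinm : Finite (O π m) := (finite_and_card_O hπ q hq m).1
  have hcard1units : Nat.card ((O π 1)ˣ) = q - 1 := by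
    have e : O π 1 ≃+* o ⧸ IsLocalRing.maximalIdeal o :=
      Ideal.quotEquivOfEq (by rw [pow_one, ← hπ.maximalIdeal_eq])
    have e2 : (O π 1)ˣ ≃* (IsLocalRing.ResidueField o)ˣ :=
      Units.mapEquiv (e.toMulEquiv : O π 1 ≃* IsLocalRing.ResidueField o)
    rw [Nat.card_congr e2.toEquiv, Nat.card_units, hq]
  have hsurj := unitsMap_red_surjective hπ m 1 le_rfl hm
  have := card_eq_card_mul_card_ker _ hsurj
  rw [this, hcard1units]
  congr 1
  rw [Nat.card_congr (unitsKer_equiv hπ m 1 le_rfl hm),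
    Nat.card_congr (ker_redMap_equiv hπ m 1 hm), (finite_and_card_O hπ q hq (m-1)).2]

end AuxCount

section AuxInertia

lemma psi_ne_zero {A : Type} [AddCommGroup A] (ψ : AddChar A ℂ) (x : A) : ψ x ≠ 0 := by
  have h := ψ.map_add_eq_mul x (-x)
  rw [add_neg_cancel, ψ.map_zero_eq_one] at h
  exact left_ne_zero_of_mul_eq_one h.symm

lemma extChar_pos {G : Type} [Group G] (N : Subgroup G) (χ : N →* ℂˣ) {x : G}
    (hx : x ∈ N) : extChar N χ x = χ ⟨x, hx⟩ := by
  unfold extChar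
  rw [dif_pos hx]

lemma extChar_neg {G : Type} [Group G] (N : Subgroup G) (χ : N →* ℂˣ) {x : G}
    (hx : ¬ x ∈ N) : extChar N χ x = 0 := by
  unfold extChar
  rw [dif_neg hx]

lemma trace_mul_std {n : Type} [DecidableEq n] [Fintype n] {R : Type} [CommRing R]
    (C : Matrix n n R) (i j : n) (x : R) :
    Matrix.trace (C * Matrix.single i j x) = C j i * x := by
  have hdiag : Matrix.diag (C * Matrix.single i j x) =
      fun a => if a = j then C a i * x else 0 := by
    funext a
    by_cases h : a = j
    · subst h
      simp [Matrix.diag, Matrix.mul_single_apply_same]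
    · simp [Matrix.diag, Matrix.mul_single_apply_of_ne (hbj := h), h]
  rw [Matrix.trace, hdiag]
  simp

variable {o : Type} [CommRing o] [IsDomain o] [IsDiscreteValuationRing o] {π : o}

lemma p_sq_zero {r : ℕ} (hr : 2 ≤ r) :
    (Ounif π r ^ ((r + 1) / 2)) * (Ounif π r ^ ((r + 1) / 2)) = (0 : O π r) := by
  rw [← pow_add]
  exact Ounif_pow_eq_zero (by omega)

/-- The element `1 + π^ℓ B` as a unit. -/
def unitOfCong {r : ℕ} (hr : 2 ≤ r) (B : Matrix (Fin 2) (Fin 2) (O π r)) :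
    GL (Fin 2) (O π r) where
  val := 1 + (Ounif π r ^ ((r + 1) / 2)) • B
  inv := 1 - (Ounif π r ^ ((r + 1) / 2)) • B
  val_inv := by
    have h0 : ((Ounif π r ^ ((r + 1) / 2)) • B) * ((Ounif π r ^ ((r + 1) / 2)) • B) = 0 := by
      rw [Matrix.smul_mul, Matrix.mul_smul, smul_smul, p_sq_zero hr, zero_smul]
    set x := (Ounif π r ^ ((r + 1) / 2)) • B with hx
    have expand : (1 + x) * (1 - x) = 1 + x - x - x * x := by noncomm_ring
    rw [expand, h0]
    simp
  inv_val := by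
    have h0 : ((Ounif π r ^ ((r + 1) / 2)) • B) * ((Ounif π r ^ ((r + 1) / 2)) • B) = 0 := by
      rw [Matrix.smul_mul, Matrix.mul_smul, smul_smul, p_sq_zero hr, zero_smul]
    set x := (Ounif π r ^ ((r + 1) / 2)) • B with hx
    have expand : (1 - x) * (1 + x) = 1 - x + x - x * x := by noncomm_ring
    rw [expand, h0]
    simp

lemma unitOfCong_mem {r : ℕ} (hr : 2 ≤ r) (B : Matrix (Fin 2) (Fin 2) (O π r)) :
    unitOfCong hr B ∈ Mgrp π r ((r + 1) / 2) := ⟨B, rfl⟩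

lemma conj_val {r : ℕ} (g x : GL (Fin 2) (O π r)) (B : Matrix (Fin 2) (Fin 2) (O π r))
    {i : ℕ} (hB : (x : Matrix (Fin 2) (Fin 2) (O π r)) = 1 + (Ounif π r ^ i) • B) :
    ((g * x * g⁻¹ : GL (Fin 2) (O π r)) : Matrix (Fin 2) (Fin 2) (O π r)) =
      1 + (Ounif π r ^ i) •
        ((g : Matrix (Fin 2) (Fin 2) (O π r)) * B *
          ((g⁻¹ : GL (Fin 2) (O π r)) : Matrix (Fin 2) (Fin 2) (O π r))) := by
  rw [Units.val_mul, Units.val_mul, hB, mul_add, mul_one, add_mul, Units.mul_inv,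
    Matrix.mul_smul, Matrix.smul_mul, mul_assoc]

lemma mem_inertia_iff_red_commutes
    (hπ : Irreducible π) {r : ℕ} (hr : 2 ≤ r)
    (ψ : AddChar (O π r) ℂ) (hψ : ψ ((Ounif π r) ^ (r - 1)) ≠ 1)
    (Atil : Matrix (Fin 2) (Fin 2) (O π r))
    (ψA : (Mgrp π r ((r + 1) / 2)) →* ℂˣ) (hψA : IsPsiChar π r ψ Atil ψA)
    (g : GL (Fin 2) (O π r)) :
    g ∈ inertia (Mgrp π r ((r + 1) / 2)) ψA ↔
      ((redMap π r (r / 2) (Nat.div_le_self r 2)).mapMatrix Atil) *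
          ((redMap π r (r / 2) (Nat.div_le_self r 2)).mapMatrix
            (g : Matrix (Fin 2) (Fin 2) (O π r))) =
        ((redMap π r (r / 2) (Nat.div_le_self r 2)).mapMatrix
            (g : Matrix (Fin 2) (Fin 2) (O π r))) *
          ((redMap π r (r / 2) (Nat.div_le_self r 2)).mapMatrix Atil) := by
  set red := redMap π r (r / 2) (Nat.div_le_self r 2) with hred
  set p := Ounif π r ^ ((r + 1) / 2) with hp
  set gv := (g : Matrix (Fin 2) (Fin 2) (O π r)) with hgv
  set giv := ((g⁻¹ : GL (Fin 2) (O π r)) : Matrix (Fin 2) (Fin 2) (O π r)) with hgiv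
  have hgig : gv * giv = 1 := Units.mul_inv g
  have hgig' : giv * gv = 1 := Units.inv_mul g
  have hconjmem : ∀ x : GL (Fin 2) (O π r), x ∈ Mgrp π r ((r + 1) / 2) → g * x * g⁻¹ ∈ Mgrp π r ((r + 1) / 2) :=
    fun x hx => (Mgrp_normal π r ((r + 1) / 2)).conj_mem x hx g
  have htr : ∀ B : Matrix (Fin 2) (Fin 2) (O π r),
      Matrix.trace (Atil * (gv * B * giv)) = Matrix.trace ((giv * Atil * gv) * B) := by
    intro B
    calc Matrix.trace (Atil * (gv * B * giv)) = Matrix.trace ((Atil * gv) * B * giv) := by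
          rw [← mul_assoc, ← mul_assoc]
      _ = Matrix.trace (giv * (Atil * gv) * B) := Matrix.trace_mul_cycle _ _ _
      _ = Matrix.trace ((giv * Atil * gv) * B) := by rw [← mul_assoc]
  constructor
  · intro hg
    have key : ∀ B : Matrix (Fin 2) (Fin 2) (O π r),
        ψ (p * Matrix.trace (Atil * (gv * B * giv))) = ψ (p * Matrix.trace (Atil * B)) := by
      intro B
      have h1 := hg (unitOfCong hr B)
      rw [extChar_pos (Mgrp π r ((r + 1) / 2)) ψA (unitOfCong_mem hr B),
        extChar_pos (Mgrp π r ((r + 1) / 2)) ψA (hconjmem _ (unitOfCong_mem hr B))] at h1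
      rw [hψA ⟨_, hconjmem _ (unitOfCong_mem hr B)⟩ (gv * B * giv)
        (conj_val g _ B rfl)] at h1
      rw [hψA ⟨_, unitOfCong_mem hr B⟩ B rfl] at h1
      exact h1
    set C := giv * Atil * gv - Atil with hC
    have keyC : ∀ B : Matrix (Fin 2) (Fin 2) (O π r), ψ (p * Matrix.trace (C * B)) = 1 := by
      intro B
      have h2 := key B
      rw [htr B] at h2
      have hsplit : giv * Atil * gv = C + Atil := by rw [hC, sub_add_cancel]
      rw [hsplit, add_mul, Matrix.trace_add, mul_add, ψ.map_add_eq_mul] at h2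
      have hne : ψ (p * Matrix.trace (Atil * B)) ≠ 0 := psi_ne_zero ψ _
      exact mul_right_cancel₀ hne (by rw [one_mul]; exact h2)
    have hent : ∀ i j, red (C i j) = 0 := by
      intro i j
      apply (unif_mul_eq_zero_iff hπ (show (r + 1) / 2 + r / 2 = r by omega) _).mp
      apply psi_nondeg hπ (by omega) ψ hψ
      intro x
      have h3 := keyC (Matrix.single j i x)
      rw [trace_mul_std] at h3
      rw [mul_assoc]
      exact h3
    have hmap0 : red.mapMatrix C = 0 := by
      ext i j
      simpa [RingHom.mapMatrix_apply, Matrix.map_apply] using hent i j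
    have hredC : red.mapMatrix giv * red.mapMatrix Atil * red.mapMatrix gv =
        red.mapMatrix Atil := by
      have h4 : red.mapMatrix (giv * Atil * gv) - red.mapMatrix Atil = 0 := by
        rw [← map_sub, ← hC, hmap0]
      rw [sub_eq_zero] at h4
      rw [← _root_.map_mul, ← _root_.map_mul]
      exact h4
    have hGGi : red.mapMatrix gv * red.mapMatrix giv = 1 := by
      rw [← _root_.map_mul, hgig, _root_.map_one]
    calc red.mapMatrix Atil * red.mapMatrix gv
        = (red.mapMatrix gv * red.mapMatrix giv) * red.mapMatrix Atil * red.mapMatrix gv := by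
          rw [hGGi, one_mul]
      _ = red.mapMatrix gv * (red.mapMatrix giv * red.mapMatrix Atil * red.mapMatrix gv) := by
          rw [mul_assoc, mul_assoc, mul_assoc]
      _ = red.mapMatrix gv * red.mapMatrix Atil := by rw [hredC]
  · intro hcomm
    have hGiG : red.mapMatrix giv * red.mapMatrix gv = 1 := by
      rw [← _root_.map_mul, hgig', _root_.map_one]
    have hred0 : red.mapMatrix (giv * Atil * gv - Atil) = 0 := by
      rw [map_sub, _root_.map_mul, _root_.map_mul, mul_assoc, hcomm, ← mul_assoc, hGiG,
        one_mul, sub_self]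
    have hp0 : ∀ i j, p * ((giv * Atil * gv - Atil) i j) = 0 := by
      intro i j
      apply (unif_mul_eq_zero_iff hπ (show (r + 1) / 2 + r / 2 = r by omega) _).mpr
      have := congrFun (congrFun hred0 i) j
      simpa [RingHom.mapMatrix_apply, Matrix.map_apply] using this
    intro x
    by_cases hx : x ∈ Mgrp π r ((r + 1) / 2)
    · obtain ⟨B, hB⟩ := hx
      have hx' : x ∈ Mgrp π r ((r + 1) / 2) := ⟨B, hB⟩
      rw [extChar_pos (Mgrp π r ((r + 1) / 2)) ψA hx', extChar_pos (Mgrp π r ((r + 1) / 2)) ψA (hconjmem x hx')]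
      rw [hψA ⟨_, hconjmem x hx'⟩ (gv * B * giv) (conj_val g x B hB)]
      rw [hψA ⟨x, hx'⟩ B hB]
      congr 1
      rw [htr B]
      have hsplit : giv * Atil * gv = (giv * Atil * gv - Atil) + Atil := by
        rw [sub_add_cancel]
      rw [hsplit, add_mul, Matrix.trace_add, mul_add]
      have hz : p * Matrix.trace ((giv * Atil * gv - Atil) * B) = 0 := by
        rw [← smul_eq_mul, ← Matrix.trace_smul, ← Matrix.smul_mul]
        have hD : p • (giv * Atil * gv - Atil) = 0 := by
          ext i j
          simpa [smul_eq_mul] using hp0 i j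
        rw [hD, Matrix.zero_mul, Matrix.trace_zero]
      rw [hz, zero_add]
    · have hx2 : ¬ (g * x * g⁻¹ ∈ Mgrp π r ((r + 1) / 2)) := by
        intro hc
        apply hx
        have h5 := (Mgrp_normal π r ((r + 1) / 2)).conj_mem _ hc g⁻¹
        have e : g⁻¹ * (g * x * g⁻¹) * g⁻¹⁻¹ = x := by group
        rwa [e] at h5
      rw [extChar_neg (Mgrp π r ((r + 1) / 2)) ψA hx, extChar_neg (Mgrp π r ((r + 1) / 2)) ψA hx2]

end AuxInertia

section AuxDet

variable {o : Type} [CommRing o] [IsDomain o] [IsDiscreteValuationRing o] {π : o}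

/-- Reduction map on `GL₂`. -/
def redGL (π : o) (r s : ℕ) (h : s ≤ r) :
    GL (Fin 2) (O π r) →* GL (Fin 2) (O π s) :=
  Units.map ((redMap π r s h).mapMatrix.toMonoidHom)

lemma redGL_val (r s : ℕ) (h : s ≤ r) (g : GL (Fin 2) (O π r)) :
    ((redGL π r s h g) : Matrix (Fin 2) (Fin 2) (O π s)) =
      (redMap π r s h).mapMatrix (g : Matrix (Fin 2) (Fin 2) (O π r)) := rfl

lemma det_redGL (r s : ℕ) (h : s ≤ r) (g : GL (Fin 2) (O π r)) :
    Matrix.GeneralLinearGroup.det (redGL π r s h g) =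
      Units.map (redMap π r s h).toMonoidHom (Matrix.GeneralLinearGroup.det g) := by
  apply Units.ext
  show ((redMap π r s h).mapMatrix (g : Matrix (Fin 2) (Fin 2) (O π r))).det =
    redMap π r s h (g : Matrix (Fin 2) (Fin 2) (O π r)).det
  exact (RingHom.map_det _ _).symm

lemma redGL_surjective (hπ : Irreducible π) (r s : ℕ) (hs1 : 1 ≤ s) (hsr : s ≤ r) :
    Function.Surjective (redGL π r s hsr) := by
  intro X
  choose lift hlift using redMap_surjective (π := π) r s hsr
  set M : Matrix (Fin 2) (Fin 2) (O π r) :=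
    Matrix.of (fun i j => lift ((X : Matrix (Fin 2) (Fin 2) (O π s)) i j)) with hM
  have hm : (redMap π r s hsr).mapMatrix M = (X : Matrix (Fin 2) (Fin 2) (O π s)) := by
    ext i j
    simp [hM, RingHom.mapMatrix_apply, Matrix.map_apply, hlift]
  have hdet : redMap π r s hsr M.det = (X : Matrix (Fin 2) (Fin 2) (O π s)).det := by
    conv_rhs => rw [← hm]
    exact RingHom.map_det _ _
  have hXdet : IsUnit (X : Matrix (Fin 2) (Fin 2) (O π s)).det :=
    (Matrix.isUnit_iff_isUnit_det _).mp X.isUnit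
  have hMdet : IsUnit M.det := isUnit_of_red hs1 hsr (by rw [hdet]; exact hXdet)
  have hMunit : IsUnit M := (Matrix.isUnit_iff_isUnit_det M).mpr hMdet
  obtain ⟨u, hu⟩ := hMunit
  refine ⟨u, Units.ext ?_⟩
  rw [redGL_val, hu, hm]

lemma det_diagGL {R : Type} [CommRing R] (d : Rˣ) :
    Matrix.GeneralLinearGroup.det (diagGL d) = d := by
  apply Units.ext
  show (Matrix.diagonal ![(d : R), 1]).det = (d : R)
  rw [Matrix.det_diagonal]
  simp [Fin.prod_univ_two]

lemma redGL_diagGL (r s : ℕ) (h : s ≤ r) (w : (O π r)ˣ)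
    (hw : redMap π r s h (w : O π r) = 1) : redGL π r s h (diagGL w) = 1 := by
  apply Units.ext
  show (redMap π r s h).mapMatrix (Matrix.diagonal ![(w : O π r), 1]) = 1
  rw [RingHom.mapMatrix_apply, Matrix.diagonal_map (map_zero _)]
  have : (fun m => redMap π r s h (![(w : O π r), 1] m)) = fun _ => (1 : O π s) := by
    funext m
    fin_cases m <;> simp [hw]
  rw [this, Matrix.diagonal_one]

lemma map_det_comap (hπ : Irreducible π) (r s : ℕ) (hs1 : 1 ≤ s) (hsr : s ≤ r)
    (C : Subgroup (GL (Fin 2) (O π s))) :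
    Subgroup.map Matrix.GeneralLinearGroup.det (Subgroup.comap (redGL π r s hsr) C) =
      Subgroup.comap (Units.map (redMap π r s hsr).toMonoidHom)
        (Subgroup.map Matrix.GeneralLinearGroup.det C) := by
  ext u
  simp only [Subgroup.mem_map, Subgroup.mem_comap]
  constructor
  · rintro ⟨g, hg, rfl⟩
    exact ⟨redGL π r s hsr g, hg, det_redGL r s hsr g⟩
  · rintro ⟨X, hX, hXdet⟩
    obtain ⟨g0, rfl⟩ := redGL_surjective hπ r s hs1 hsr X
    set w : (O π r)ˣ := u * (Matrix.GeneralLinearGroup.det g0)⁻¹ with hwdef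
    have hw1 : redMap π r s hsr (w : O π r) = 1 := by
      have h1 : Units.map (redMap π r s hsr).toMonoidHom (Matrix.GeneralLinearGroup.det g0) =
          Units.map (redMap π r s hsr).toMonoidHom u := by
        rw [← det_redGL r s hsr g0, hXdet]
      have h2 : Units.map (redMap π r s hsr).toMonoidHom w = 1 := by
        rw [hwdef, _root_.map_mul, map_inv, h1, mul_inv_cancel]
      have h3 := congrArg Units.val h2
      simpa using h3
    refine ⟨g0 * diagGL w, ?_, ?_⟩
    · show redGL π r s hsr (g0 * diagGL w) ∈ C
      rw [_root_.map_mul, redGL_diagGL r s hsr w hw1, mul_one]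
      exact hX
    · rw [_root_.map_mul, det_diagGL, hwdef, mul_comm]
      exact inv_mul_cancel_right _ _

end AuxDet
theorem statement11
    (o : Type) [CommRing o] [IsDomain o] [IsDiscreteValuationRing o]
    (π : o) (hπ : Irreducible π)
    [Finite (IsLocalRing.ResidueField o)]
    (q : ℕ) (hq : Nat.card (IsLocalRing.ResidueField o) = q)
    (r : ℕ) (hr : 2 ≤ r)
    (ψ : AddChar (O π r) ℂ) (hψ : ψ ((Ounif π r) ^ (r - 1)) ≠ 1)
    (A : Matrix (Fin 2) (Fin 2) (O π (r / 2))) (hA : IsCyclicMat A)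
    (Atil : Matrix (Fin 2) (Fin 2) (O π r))
    (hlift : (redMap π r (r / 2) (Nat.div_le_self r 2)).mapMatrix Atil = A)
    (ψA : (Mgrp π r ((r + 1) / 2)) →* ℂˣ) (hψA : IsPsiChar π r ψ Atil ψA)
    :
    ((inertia (Mgrp π r ((r + 1) / 2)) ψA).map Matrix.GeneralLinearGroup.det).index * Nat.card ((matCentralizer (O π (r / 2)) A).map Matrix.GeneralLinearGroup.det) =
      (q - 1) * q ^ (r / 2 - 1) ∧
    Nat.card ((inertia (Mgrp π r ((r + 1) / 2)) ψA).map Matrix.GeneralLinearGroup.det) =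
      Nat.card ((matCentralizer (O π (r / 2)) A).map Matrix.GeneralLinearGroup.det) * q ^ ((r + 1) / 2)
    := by
  have hs1 : 1 ≤ r / 2 := by omega
  have hsr : r / 2 ≤ r := Nat.div_le_self r 2
  have hinertia : inertia (Mgrp π r ((r + 1) / 2)) ψA =
      Subgroup.comap (redGL π r (r / 2) (Nat.div_le_self r 2))
        (matCentralizer (O π (r / 2)) A) := by
    ext g
    have hiff := mem_inertia_iff_red_commutes hπ hr ψ hψ Atil ψA hψA g
    rw [hiff]
    constructor
    · intro h
      show A * (redMap π r (r / 2) (Nat.div_le_self r 2)).mapMatrix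
          (g : Matrix (Fin 2) (Fin 2) (O π r)) =
        (redMap π r (r / 2) (Nat.div_le_self r 2)).mapMatrix
          (g : Matrix (Fin 2) (Fin 2) (O π r)) * A
      rw [← hlift]
      exact h
    · intro h
      have h2 : A * (redMap π r (r / 2) (Nat.div_le_self r 2)).mapMatrix
          (g : Matrix (Fin 2) (Fin 2) (O π r)) =
        (redMap π r (r / 2) (Nat.div_le_self r 2)).mapMatrix
          (g : Matrix (Fin 2) (Fin 2) (O π r)) * A := h
      rw [← hlift] at h2
      exact h2
  have hdet : (inertia (Mgrp π r ((r + 1) / 2)) ψA).map Matrix.GeneralLinearGroup.det =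
      Subgroup.comap (Units.map (redMap π r (r / 2) (Nat.div_le_self r 2)).toMonoidHom)
        ((matCentralizer (O π (r / 2)) A).map Matrix.GeneralLinearGroup.det) := by
    rw [hinertia, map_det_comap hπ r (r / 2) hs1 (Nat.div_le_self r 2)]
  haveI : Finite (O π (r / 2)) := (finite_and_card_O hπ q hq (r / 2)).1
  constructor
  · rw [hdet,
      Subgroup.index_comap_of_surjective _ (unitsMap_red_surjective hπ r (r / 2) hs1 hsr),
      Subgroup.index_mul_card]
    exact card_units_O hπ q hq (r / 2) hs1
  · rw [hdet,
      card_comap_of_surjective _ (unitsMap_red_surjective hπ r (r / 2) hs1 hsr)]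
    congr 1
    rw [Nat.card_congr (unitsKer_equiv hπ r (r / 2) hs1 hsr),
      Nat.card_congr (ker_redMap_equiv hπ r (r / 2) hsr),
      (finite_and_card_O hπ q hq (r - r / 2)).2]
    congr 1
    omega
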